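/- For every finite word w over {1,2}, setting v = E_w (1,1,3)^T, one has (-1,-1,14) E_2 v >= (-1,-1,14) E_1 v. -/

import Mathlib

open Matrix BigOperators

/-- The matrix `E_0`. -/
noncomputable def E0 : Matrix (Fin 3) (Fin 3) ℝ :=
  !![47/75, -1/25, -1/25; 14/75, 3/25, -2/25; 14/75, -2/25, 3/25]

/-- The matrix `E_1`. -/
noncomputable def E1 : Matrix (Fin 3) (Fin 3) ℝ :=
  !![3/25, 14/75, -2/25; -1/25, 47/75, -1/25; -2/25, 14/75, 3/25]

/-- The matrix `E_2`. -/
noncomputable def E2 : Matrix (Fin 3) (Fin 3) ℝ :=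
  !![3/25, -2/25, 14/75; -2/25, 3/25, 14/75; -1/25, -1/25, 47/75]

/-- `Emat i` is the matrix `E_i`. -/
noncomputable def Emat : Fin 3 → Matrix (Fin 3) (Fin 3) ℝ := ![E0, E1, E2]

/-- For a word `w = [w₁, ..., wₘ]`, `Eword w = E_{wₘ} * ⋯ * E_{w₁}`
(the empty word giving the identity matrix). -/
noncomputable def Eword (w : List (Fin 3)) : Matrix (Fin 3) (Fin 3) ℝ :=
  ((w.map Emat).reverse).prod


/-- The invariant cone: 11 linear inequalities preserved by `E1` and `E2`. -/
def Pinv (v : Fin 3 → ℝ) : Prop :=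
  0 ≤ v 0 - 4 * v 1 + 11 * v 2 ∧
  0 ≤ -4 * v 0 + v 1 + v 2 ∧
  0 ≤ 3 * v 0 - 2 * v 1 + 3 * v 2 ∧
  0 ≤ 3 * v 0 + 3 * v 1 - 2 * v 2 ∧
  0 ≤ 147 * v 0 - 83 * v 1 + 107 * v 2 ∧
  0 ≤ 977 * v 0 - 423 * v 1 + 427 * v 2 ∧
  0 ≤ 2117 * v 0 - 683 * v 1 + 517 * v 2 ∧
  0 ≤ 10413 * v 0 - 2087 * v 1 + 913 * v 2 ∧
  0 ≤ 1823 * v 0 - 77 * v 1 - 177 * v 2 ∧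
  0 ≤ 169 * v 0 + 44 * v 1 - 56 * v 2 ∧
  0 ≤ 923 * v 0 + 823 * v 1 - 577 * v 2

lemma E1_mulVec (v : Fin 3 → ℝ) :
    E1 *ᵥ v = ![3/25 * v 0 + 14/75 * v 1 - 2/25 * v 2,
      -1/25 * v 0 + 47/75 * v 1 - 1/25 * v 2,
      -2/25 * v 0 + 14/75 * v 1 + 3/25 * v 2] := by
  funext i
  fin_cases i <;>
    simp [E1, Matrix.mulVec, dotProduct, Fin.sum_univ_three, Matrix.vecHead, Matrix.vecTail] <;> ring

lemma E2_mulVec (v : Fin 3 → ℝ) :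
    E2 *ᵥ v = ![3/25 * v 0 - 2/25 * v 1 + 14/75 * v 2,
      -2/25 * v 0 + 3/25 * v 1 + 14/75 * v 2,
      -1/25 * v 0 - 1/25 * v 1 + 47/75 * v 2] := by
  funext i
  fin_cases i <;>
    simp [E2, Matrix.mulVec, dotProduct, Fin.sum_univ_three, Matrix.vecHead, Matrix.vecTail] <;> ring

lemma Pinv_E1 (v : Fin 3 → ℝ) (h : Pinv v) : Pinv (E1 *ᵥ v) := by
  obtain ⟨h0, h1, h2, h3, h4, h5, h6, h7, h8, h9, h10⟩ := h
  rw [E1_mulVec]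
  refine ⟨?_, ?_, ?_, ?_, ?_, ?_, ?_, ?_, ?_, ?_, ?_⟩ <;>
    · simp only [Matrix.cons_val_zero, Matrix.cons_val_one, Matrix.head_cons,
        Matrix.cons_val_two, Matrix.tail_cons]
      linarith

lemma Pinv_E2 (v : Fin 3 → ℝ) (h : Pinv v) : Pinv (E2 *ᵥ v) := by
  obtain ⟨h0, h1, h2, h3, h4, h5, h6, h7, h8, h9, h10⟩ := h
  rw [E2_mulVec]
  refine ⟨?_, ?_, ?_, ?_, ?_, ?_, ?_, ?_, ?_, ?_, ?_⟩ <;>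
    · simp only [Matrix.cons_val_zero, Matrix.cons_val_one, Matrix.head_cons,
        Matrix.cons_val_two, Matrix.tail_cons]
      linarith

lemma Eword_nil : Eword [] = 1 := by simp [Eword]

lemma Eword_cons (a : Fin 3) (t : List (Fin 3)) :
    Eword (a :: t) = Eword t * Emat a := by
  simp [Eword, List.map_cons, List.reverse_cons, List.prod_append]

lemma Pinv_word (w : List (Fin 3)) (hw : ∀ i ∈ w, i = 1 ∨ i = 2)
    (v : Fin 3 → ℝ) (h : Pinv v) : Pinv (Eword w *ᵥ v) := by
  induction w generalizing v with
  | nil => simpa [Eword_nil] using h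
  | cons a t ih =>
    rw [Eword_cons, ← Matrix.mulVec_mulVec]
    refine ih (fun i hi => hw i (List.mem_cons_of_mem a hi)) _ ?_
    rcases hw a List.mem_cons_self with ha | ha <;> subst ha
    · simpa [Emat] using Pinv_E1 v h
    · simpa [Emat] using Pinv_E2 v h

/-- For every finite word `w` over `{1,2}`, setting `v = E_w (1,1,3)ᵀ`,
one has `(-1,-1,14) E₂ v ≥ (-1,-1,14) E₁ v`. -/
theorem stmt_4 (w : List (Fin 3)) (hw : ∀ i ∈ w, i = 1 ∨ i = 2) :
    (![-1, -1, 14] : Fin 3 → ℝ) ⬝ᵥ (E2 *ᵥ (Eword w *ᵥ ![1, 1, 3])) ≥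
      (![-1, -1, 14] : Fin 3 → ℝ) ⬝ᵥ (E1 *ᵥ (Eword w *ᵥ ![1, 1, 3])) := by
  have h13 : Pinv (![1, 1, 3] : Fin 3 → ℝ) := by
    refine ⟨?_, ?_, ?_, ?_, ?_, ?_, ?_, ?_, ?_, ?_, ?_⟩ <;> norm_num [Matrix.cons_val_two, Matrix.tail_cons, Matrix.head_cons]
  have hP := Pinv_word w hw _ h13
  set v := Eword w *ᵥ ![1, 1, 3] with hv
  obtain ⟨h0, -⟩ := hP
  rw [E1_mulVec, E2_mulVec]
  simp only [dotProduct, Fin.sum_univ_three, Matrix.cons_val_zero,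
    Matrix.cons_val_one, Matrix.head_cons, Matrix.cons_val_two, Matrix.tail_cons]
  linarith
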